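/- arXiv:1310.5729 — 3 statements merged into one kernel-verified Lean document; each statement's English description precedes it below -/
import Mathlib

section
/- Let d ≥ 1 and let A and B be subsets of ℤ^d such that the lower density of A equals α > 0 and the Banach density of B is positive. Then for every ε > 0, A + B is lower syndetic of level α − ε; that is, there exists m ∈ ℕ such that for all k ∈ ℕ, the lower density of the set {z ∈ ℤ^d : z + [-k,k]^d ⊆ A + B + [-m,m]^d} is at least α − ε. -/
open Filter Pointwise

/-- The `d`-dimensional cube `[-m, m]^d` in `ℤ^d`. -/
def cube (d m : ℕ) : Set (Fin d → ℤ) :=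
  Set.Icc (fun _ => -(m : ℤ)) (fun _ => (m : ℤ))

/-- The translated cube `z + [-k, k]^d`. -/
def cubeAt (d k : ℕ) (z : Fin d → ℤ) : Set (Fin d → ℤ) :=
  Set.Icc (fun i => z i - (k : ℤ)) (fun i => z i + (k : ℤ))

/-- Lower asymptotic density of `A ⊆ ℤ^d`. -/
noncomputable def lowerDensity (d : ℕ) (A : Set (Fin d → ℤ)) : ℝ :=
  liminf (fun n : ℕ => (Set.ncard (A ∩ cube d n) : ℝ) / (2 * (n : ℝ) + 1) ^ d) atTop

/-- (Upper) Banach density of `A ⊆ ℤ^d`; the limit defining it exists, so we may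
express it as a `limsup`. -/
noncomputable def banachDensity (d : ℕ) (A : Set (Fin d → ℤ)) : ℝ :=
  limsup (fun n : ℕ =>
    (⨆ x : Fin d → ℤ, (Set.ncard (A ∩ cubeAt d n x) : ℝ)) / (2 * (n : ℝ) + 1) ^ d) atTop

namespace SumsetAux
variable {d : ℕ}

/-- The window `[x - n, x + n]` as a finset. -/
noncomputable def windowF (x : Fin d → ℤ) (n : ℕ) : Finset (Fin d → ℤ) :=
  Finset.Icc (fun i => x i - (n : ℤ)) (fun i => x i + (n : ℤ))

/-- The number of points of `A` in the window of radius `n` around `x`. -/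
noncomputable def cnt (A : Set (Fin d → ℤ)) (n : ℕ) (x : Fin d → ℤ) : ℕ :=
  (A ∩ cubeAt d n x).ncard

lemma mem_windowF {x w : Fin d → ℤ} {n : ℕ} :
    w ∈ windowF x n ↔ ∀ i, x i - (n:ℤ) ≤ w i ∧ w i ≤ x i + (n:ℤ) := by
  simp [windowF, Finset.mem_Icc, Pi.le_def, forall_and]

lemma card_windowF (x : Fin d → ℤ) (n : ℕ) : (windowF x n).card = (2*n+1)^d := by
  rw [windowF, Pi.card_Icc]
  have : ∀ i : Fin d, (Finset.Icc (x i - (n:ℤ)) (x i + (n:ℤ))).card = 2*n+1 := by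
    intro i; rw [Int.card_Icc]; omega
  simp only [this, Finset.prod_const, Finset.card_univ, Fintype.card_fin]

lemma coe_windowF (x : Fin d → ℤ) (n : ℕ) :
    (windowF x n : Set (Fin d → ℤ)) = cubeAt d n x := by
  simp [windowF, cubeAt, Finset.coe_Icc]

lemma cnt_eq_card (A : Set (Fin d → ℤ)) (n : ℕ) (x : Fin d → ℤ) [DecidablePred (· ∈ A)] :
    cnt A n x = ((windowF x n).filter (fun w => w ∈ A)).card := by
  rw [cnt, ← coe_windowF, ← Set.ncard_coe_finset]
  congr 1
  ext w
  simp [Set.mem_inter_iff, and_comm]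

lemma ncard_inter_cubeAt (A : Set (Fin d → ℤ)) (n : ℕ) (x : Fin d → ℤ) :
    (A ∩ cubeAt d n x).ncard = cnt A n x := rfl

lemma cube_eq_cubeAt (d m : ℕ) : cube d m = cubeAt d m 0 := by
  simp [cube, cubeAt]

lemma ncard_inter_cube (A : Set (Fin d → ℤ)) (n : ℕ) :
    (A ∩ cube d n).ncard = cnt A n 0 := by
  rw [cube_eq_cubeAt, ncard_inter_cubeAt]

lemma cnt_le (A : Set (Fin d → ℤ)) (n : ℕ) (x : Fin d → ℤ) : cnt A n x ≤ (2*n+1)^d := by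
  classical
  rw [cnt_eq_card, ← card_windowF x n]
  exact Finset.card_filter_le _ _

lemma windowF_subset {c₁ c₂ : Fin d → ℤ} {n M : ℕ}
    (h : ∀ i, c₂ i - (M:ℤ) ≤ c₁ i - n ∧ c₁ i + n ≤ c₂ i + M) :
    windowF c₁ n ⊆ windowF c₂ M := by
  intro w hw
  rw [mem_windowF] at hw ⊢
  intro i
  exact ⟨(h i).1.trans (hw i).1, (hw i).2.trans (h i).2⟩

lemma cnt_ge_of_window_subset {A : Set (Fin d → ℤ)} {c₁ c₂ : Fin d → ℤ} {n M : ℕ}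
    (h : windowF c₁ n ⊆ windowF c₂ M) :
    cnt A M c₂ ≤ cnt A n c₁ + ((2*M+1)^d - (2*n+1)^d) := by
  classical
  rw [cnt_eq_card, cnt_eq_card]
  have h1 : (windowF c₂ M).filter (fun w => w ∈ A) ⊆
      (windowF c₁ n).filter (fun w => w ∈ A) ∪ (windowF c₂ M \ windowF c₁ n) := by
    intro w hw
    rw [Finset.mem_filter] at hw
    by_cases hc : w ∈ windowF c₁ n
    · exact Finset.mem_union_left _ (Finset.mem_filter.mpr ⟨hc, hw.2⟩)
    · exact Finset.mem_union_right _ (Finset.mem_sdiff.mpr ⟨hw.1, hc⟩)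
  calc ((windowF c₂ M).filter (fun w => w ∈ A)).card ≤ _ := Finset.card_le_card h1
    _ ≤ ((windowF c₁ n).filter (fun w => w ∈ A)).card + (windowF c₂ M \ windowF c₁ n).card :=
        Finset.card_union_le _ _
    _ = _ := by rw [Finset.card_sdiff_of_subset h, card_windowF, card_windowF]

lemma cnt_reflect (A : Set (Fin d → ℤ)) (n : ℕ) (x y : Fin d → ℤ) :
    cnt A n (y - x) = cnt {w | y - w ∈ A} n x := by
  classical
  rw [cnt_eq_card, cnt_eq_card]
  apply Finset.card_bij (fun w _ => y - w)
  · intro w hw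
    rw [Finset.mem_filter] at hw ⊢
    refine ⟨?_, ?_⟩
    · rw [mem_windowF] at hw ⊢
      intro i
      have := hw.1 i
      simp only [Pi.sub_apply] at this ⊢
      omega
    · show y - (y - w) ∈ A
      have he : y - (y - w) = w := by funext i; simp
      rw [he]; exact hw.2
  · intro w₁ h₁ w₂ h₂ he
    funext i
    have := congrFun he i
    simp only [Pi.sub_apply] at this
    omega
  · intro w hw
    rw [Finset.mem_filter, mem_windowF] at hw
    refine ⟨y - w, Finset.mem_filter.mpr ⟨?_, hw.2⟩, by funext i; simp⟩
    rw [mem_windowF]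
    intro i
    have := hw.1 i
    simp only [Pi.sub_apply] at this ⊢
    omega

lemma cnt_add_le_of_disjoint {A C : Set (Fin d → ℤ)} (h : ∀ w, w ∈ A → w ∉ C)
    (n : ℕ) (x : Fin d → ℤ) :
    cnt A n x + cnt C n x ≤ (2*n+1)^d := by
  classical
  rw [cnt_eq_card, cnt_eq_card, ← card_windowF x n]
  rw [← Finset.card_union_of_disjoint]
  · apply Finset.card_le_card
    intro w hw
    rcases Finset.mem_union.mp hw with h' | h' <;> exact (Finset.mem_filter.mp h').1
  · rw [Finset.disjoint_filter]
    intro w _ hw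
    exact h w hw

section cells
variable (x : Fin d → ℤ) (n₀ : ℕ)

/-- center of the cell containing `w`, in the grid of cells of radius `n₀` based at `x`. -/
def cellCenter (w : Fin d → ℤ) : Fin d → ℤ :=
  fun i => x i + (2*(n₀:ℤ)+1) * ((w i - x i + n₀) / (2*(n₀:ℤ)+1))

lemma mem_cell_self (w : Fin d → ℤ) : w ∈ windowF (cellCenter x n₀ w) n₀ := by
  rw [mem_windowF]
  intro i
  have hp0 : (2*(n₀:ℤ)+1) ≠ 0 := by positivity
  have h1 := Int.mul_ediv_add_emod (w i - x i + n₀) (2*(n₀:ℤ)+1)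
  have h2 := Int.emod_nonneg (w i - x i + n₀) hp0
  have h3 := Int.emod_lt_of_pos (w i - x i + n₀) (by positivity : (0:ℤ) < 2*(n₀:ℤ)+1)
  simp only [cellCenter]
  omega

lemma cellCenter_eq_of_mem {w y : Fin d → ℤ} (hy : ∃ w', cellCenter x n₀ w' = y)
    (hw : w ∈ windowF y n₀) : cellCenter x n₀ w = y := by
  obtain ⟨w', rfl⟩ := hy
  rw [mem_windowF] at hw
  funext i
  have hp0 : (2*(n₀:ℤ)+1) ≠ 0 := by positivity
  have hwi := hw i
  simp only [cellCenter] at hwi ⊢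
  have key : ∀ q g : ℤ, (2*(n₀:ℤ)+1)*g ≤ q → q < (2*(n₀:ℤ)+1)*g + (2*(n₀:ℤ)+1) →
      q / (2*(n₀:ℤ)+1) = g := by
    intro q g h1 h2
    have h3 : q = (q - (2*(n₀:ℤ)+1)*g) + g*(2*(n₀:ℤ)+1) := by ring
    rw [h3, Int.add_mul_ediv_right _ _ hp0, Int.ediv_eq_zero_of_lt (by omega) (by omega)]
    ring
  have hdd : (w i - x i + (n₀:ℤ)) / (2 * (n₀:ℤ) + 1) = (w' i - x i + (n₀:ℤ)) / (2 * (n₀:ℤ) + 1) := by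
    apply key <;> omega
  rw [hdd]

lemma cell_decomp (B : Set (Fin d → ℤ)) (n : ℕ) :
    ∃ S : Finset (Fin d → ℤ),
      (cnt B n x ≤ ∑ y ∈ S, cnt B n₀ y) ∧
      (S.card * (2*n₀+1)^d ≤ cnt (B + cube d (2*n₀)) (n + 2*n₀) x) := by
  classical
  set F : Finset (Fin d → ℤ) := (windowF x n).filter (fun w => w ∈ B) with hF
  set S : Finset (Fin d → ℤ) := F.image (cellCenter x n₀) with hS
  refine ⟨S, ?_, ?_⟩
  · rw [cnt_eq_card, ← hF]
    rw [Finset.card_eq_sum_card_fiberwise (f := cellCenter x n₀) (t := S)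
      (fun w hw => Finset.mem_image_of_mem _ hw)]
    apply Finset.sum_le_sum
    intro y hy
    rw [cnt_eq_card]
    apply Finset.card_le_card
    intro w hw
    rw [Finset.mem_filter] at hw ⊢
    obtain ⟨hwF, hwc⟩ := hw
    rw [hF, Finset.mem_filter] at hwF
    refine ⟨?_, hwF.2⟩
    rw [← hwc]
    exact mem_cell_self x n₀ w
  · set U : Finset (Fin d → ℤ) := S.biUnion (fun y => windowF y n₀) with hU
    have hdisj : ∀ y₁ ∈ S, ∀ y₂ ∈ S, y₁ ≠ y₂ →
        Disjoint (windowF y₁ n₀) (windowF y₂ n₀) := by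
      intro y₁ h₁ y₂ h₂ hne
      rw [Finset.disjoint_left]
      intro w hw₁ hw₂
      apply hne
      obtain ⟨b₁, _, hb₁⟩ := Finset.mem_image.mp h₁
      obtain ⟨b₂, _, hb₂⟩ := Finset.mem_image.mp h₂
      rw [← cellCenter_eq_of_mem x n₀ ⟨b₁, hb₁⟩ hw₁, ← cellCenter_eq_of_mem x n₀ ⟨b₂, hb₂⟩ hw₂]
    have hcard : U.card = S.card * (2*n₀+1)^d := by
      rw [hU, Finset.card_biUnion hdisj]
      simp [card_windowF]
    rw [cnt_eq_card, ← hcard]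
    apply Finset.card_le_card
    intro w hw
    rw [hU, Finset.mem_biUnion] at hw
    obtain ⟨y, hyS, hwy⟩ := hw
    have hyS' := hyS
    rw [hS, Finset.mem_image] at hyS'
    obtain ⟨b, hbF, hbc⟩ := hyS'
    rw [hF, Finset.mem_filter] at hbF
    obtain ⟨hbw, hbB⟩ := hbF
    have hbcell : b ∈ windowF y n₀ := by rw [← hbc]; exact mem_cell_self x n₀ b
    rw [Finset.mem_filter]
    constructor
    · rw [mem_windowF] at hbw hwy hbcell ⊢
      intro i
      have h1 := hbw i; have h2 := hwy i; have h3 := hbcell i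
      push_cast
      push_cast at h1 h2 h3
      omega
    · have hw : w = b + (w - b) := by ring
      rw [hw]
      apply Set.add_mem_add hbB
      rw [cube, Set.mem_Icc]
      rw [mem_windowF] at hwy hbcell
      constructor <;> rw [Pi.le_def] <;> intro i <;>
        · have h2 := hwy i
          have h3 := hbcell i
          simp only [Pi.sub_apply]
          push_cast
          omega
end cells

/-! ### Analytic lemmas -/

lemma cube_ratio (d : ℕ) {n M : ℕ} (h : n ≤ M) {θ : ℝ} (hθ : 0 ≤ θ)
    (hM : (d:ℝ) * (2*(M:ℝ) - 2*(n:ℝ)) ≤ θ * (2*(M:ℝ)+1)) :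
    (1 - θ) * (2*(M:ℝ)+1)^d ≤ (2*(n:ℝ)+1)^d := by
  have hMpos : (0:ℝ) < 2*(M:ℝ)+1 := by positivity
  have hnM : (n:ℝ) ≤ (M:ℝ) := by exact_mod_cast h
  have hn0 : (0:ℝ) ≤ (n:ℝ) := by positivity
  obtain ⟨t, ht⟩ : ∃ t : ℝ, t = (2*(M:ℝ) - 2*(n:ℝ))/(2*(M:ℝ)+1) := ⟨_, rfl⟩
  have ht0 : 0 ≤ t := by rw [ht]; apply div_nonneg _ hMpos.le; linarith
  have ht1 : t ≤ 1 := by rw [ht, div_le_one hMpos]; linarith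
  have hdt : (d:ℝ) * t ≤ θ := by
    rw [ht, ← mul_div_assoc, div_le_iff₀ hMpos]
    exact hM
  have hb : 1 - (d:ℝ) * t ≤ (1 - t)^d := by
    have := one_add_mul_le_pow (a := -t) (by linarith) d
    calc 1 - (d:ℝ)*t = 1 + (d:ℝ)*(-t) := by ring
      _ ≤ (1 + (-t))^d := this
      _ = (1 - t)^d := by ring_nf
  have he : (2*(n:ℝ)+1) = (2*(M:ℝ)+1) * (1 - t) := by
    rw [ht]
    field_simp
    ring
  calc (1 - θ) * (2*(M:ℝ)+1)^d ≤ (1 - (d:ℝ)*t) * (2*(M:ℝ)+1)^d := by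
        apply mul_le_mul_of_nonneg_right _ (by positivity)
        linarith
    _ ≤ (1 - t)^d * (2*(M:ℝ)+1)^d :=
        mul_le_mul_of_nonneg_right hb (by positivity)
    _ = ((2*(M:ℝ)+1) * (1 - t))^d := by rw [mul_pow]; ring
    _ = (2*(n:ℝ)+1)^d := by rw [← he]

lemma cnt_le_real (A : Set (Fin d → ℤ)) (n : ℕ) (x : Fin d → ℤ) :
    (cnt A n x : ℝ) ≤ (2*(n:ℝ)+1)^d := by
  calc (cnt A n x : ℝ) ≤ (((2*n+1)^d : ℕ) : ℝ) := by exact_mod_cast cnt_le A n x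
    _ = (2*(n:ℝ)+1)^d := by push_cast; ring

lemma lowerDensity_eq (A : Set (Fin d → ℤ)) :
    lowerDensity d A = liminf (fun n : ℕ => (cnt A n 0 : ℝ) / (2*(n:ℝ)+1)^d) atTop := by
  rw [lowerDensity]
  congr 1
  funext n
  rw [ncard_inter_cube]

lemma banachDensity_eq (B : Set (Fin d → ℤ)) :
    banachDensity d B = limsup (fun n : ℕ =>
      (⨆ x : Fin d → ℤ, (cnt B n x : ℝ)) / (2*(n:ℝ)+1)^d) atTop := rfl

lemma bddAbove_cnt (B : Set (Fin d → ℤ)) (n : ℕ) :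
    BddAbove (Set.range fun x : Fin d → ℤ => (cnt B n x : ℝ)) := by
  refine ⟨(2*(n:ℝ)+1)^d, ?_⟩
  rintro r ⟨x, rfl⟩
  exact cnt_le_real B n x

lemma density_ratio_nonneg (A : Set (Fin d → ℤ)) (n : ℕ) :
    0 ≤ (cnt A n 0 : ℝ) / (2*(n:ℝ)+1)^d := by positivity

lemma density_ratio_le_one (A : Set (Fin d → ℤ)) (n : ℕ) :
    (cnt A n 0 : ℝ) / (2*(n:ℝ)+1)^d ≤ 1 := by
  rw [div_le_one (by positivity)]
  exact cnt_le_real A n 0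

lemma eventually_count_lower {A : Set (Fin d → ℤ)} {α η : ℝ}
    (hA : lowerDensity d A = α) (hη : 0 < η) :
    ∀ᶠ N : ℕ in atTop, (α - η) * (2*(N:ℝ)+1)^d ≤ (cnt A N 0 : ℝ) := by
  have hlt : α - η < liminf (fun n : ℕ => (cnt A n 0 : ℝ) / (2*(n:ℝ)+1)^d) atTop := by
    rw [← lowerDensity_eq, hA]; linarith
  have hbdd : IsBoundedUnder (· ≥ ·) atTop (fun n : ℕ => (cnt A n 0 : ℝ) / (2*(n:ℝ)+1)^d) :=
    isBoundedUnder_of ⟨0, fun n => density_ratio_nonneg A n⟩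
  filter_upwards [eventually_lt_of_lt_liminf hlt hbdd] with N hN
  rw [lt_div_iff₀ (by positivity : (0:ℝ) < (2*(N:ℝ)+1)^d)] at hN
  linarith

lemma alpha_le_one {A : Set (Fin d → ℤ)} {α : ℝ} (hA : lowerDensity d A = α) : α ≤ 1 := by
  rw [← hA, lowerDensity_eq]
  apply liminf_le_of_frequently_le
  · exact Filter.Frequently.of_forall (fun n => density_ratio_le_one A n)
  · exact isBoundedUnder_of ⟨0, fun n => density_ratio_nonneg A n⟩

lemma eventually_count_upper {B : Set (Fin d → ℤ)} {β η : ℝ}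
    (hB : banachDensity d B = β) (hη : 0 < η) :
    ∀ᶠ n : ℕ in atTop, ∀ x : Fin d → ℤ, (cnt B n x : ℝ) ≤ (β + η) * (2*(n:ℝ)+1)^d := by
  have hlt : limsup (fun n : ℕ =>
      (⨆ x : Fin d → ℤ, (cnt B n x : ℝ)) / (2*(n:ℝ)+1)^d) atTop < β + η := by
    rw [← banachDensity_eq, hB]; linarith
  have hbdd : IsBoundedUnder (· ≤ ·) atTop (fun n : ℕ =>
      (⨆ x : Fin d → ℤ, (cnt B n x : ℝ)) / (2*(n:ℝ)+1)^d) := by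
    refine isBoundedUnder_of ⟨1, fun n => ?_⟩
    rw [div_le_one (by positivity)]
    exact ciSup_le (fun x => cnt_le_real B n x)
  filter_upwards [eventually_lt_of_limsup_lt hlt hbdd] with n hn x
  have h1 : (cnt B n x : ℝ) ≤ ⨆ x : Fin d → ℤ, (cnt B n x : ℝ) :=
    le_ciSup (bddAbove_cnt B n) x
  have h2 : (⨆ x : Fin d → ℤ, (cnt B n x : ℝ)) ≤ (β + η) * (2*(n:ℝ)+1)^d := by
    rw [div_lt_iff₀ (by positivity : (0:ℝ) < (2*(n:ℝ)+1)^d)] at hn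
    linarith
  linarith

lemma frequently_count_lower {B : Set (Fin d → ℤ)} {β η : ℝ}
    (hB : banachDensity d B = β) (hη : 0 < η) :
    ∃ᶠ n : ℕ in atTop, ∃ x : Fin d → ℤ, (β - η) * (2*(n:ℝ)+1)^d < (cnt B n x : ℝ) := by
  have hlt : β - η < limsup (fun n : ℕ =>
      (⨆ x : Fin d → ℤ, (cnt B n x : ℝ)) / (2*(n:ℝ)+1)^d) atTop := by
    rw [← banachDensity_eq, hB]; linarith
  have hcb : IsCoboundedUnder (· ≤ ·) atTop (fun n : ℕ =>
      (⨆ x : Fin d → ℤ, (cnt B n x : ℝ)) / (2*(n:ℝ)+1)^d) := by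
    apply Filter.IsBoundedUnder.isCoboundedUnder_le
    refine isBoundedUnder_of ⟨0, fun n => ?_⟩
    have : (0:ℝ) ≤ (⨆ x : Fin d → ℤ, (cnt B n x : ℝ)) :=
      le_trans (by positivity) (le_ciSup (bddAbove_cnt B n) 0)
    positivity
  apply (frequently_lt_of_lt_limsup hcb hlt).mono
  intro n hn
  have hpos : (0:ℝ) < (2*(n:ℝ)+1)^d := by positivity
  rw [lt_div_iff₀ hpos] at hn
  exact (lt_ciSup_iff (bddAbove_cnt B n)).mp hn

/-! ### Lemma L : thickened `B` has Banach density close to 1 -/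

lemma lemL {B : Set (Fin d → ℤ)} {β : ℝ} (hβ : banachDensity d B = β) (hβpos : 0 < β)
    {δ : ℝ} (hδ0 : 0 < δ) (hδ2 : δ ≤ 1/2) :
    ∃ m₀ : ℕ, ∀ K : ℕ, ∃ n' : ℕ, K ≤ n' ∧ ∃ x' : Fin d → ℤ,
      (1 - δ) * (2*(n':ℝ)+1)^d ≤ (cnt (B + cube d m₀) n' x' : ℝ) := by
  have hη0 : 0 < β*δ/4 := by positivity
  obtain ⟨n₀, hup⟩ := (eventually_count_upper hβ hη0).exists_forall_of_atTop
  refine ⟨2*n₀, fun K => ?_⟩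
  obtain ⟨n₁, hn₁⟩ := exists_nat_ge (4*(d:ℝ)*n₀/δ)
  obtain ⟨n, ⟨⟨x_B, hxB⟩, hnge⟩⟩ :=
    ((frequently_count_lower hβ hη0).and_eventually
      (eventually_ge_atTop (max (max K n₁) n₀))).exists
  refine ⟨n + 2*n₀, le_trans (le_trans (le_max_left K n₁) (le_max_left _ n₀)) hnge
      |>.trans (Nat.le_add_right n (2*n₀)), x_B, ?_⟩
  obtain ⟨S, h1, h2⟩ := cell_decomp x_B n₀ B n
  set η : ℝ := β*δ/4 with hηdef
  have hc1 : ((cnt B n x_B : ℕ) : ℝ) ≤ (S.card : ℝ) * ((β + η) * (2*(n₀:ℝ)+1)^d) := by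
    calc ((cnt B n x_B : ℕ) : ℝ) ≤ ((∑ y ∈ S, cnt B n₀ y : ℕ) : ℝ) := by exact_mod_cast h1
      _ = ∑ y ∈ S, ((cnt B n₀ y : ℕ) : ℝ) := by push_cast; rfl
      _ ≤ ∑ y ∈ S, ((β + η) * (2*(n₀:ℝ)+1)^d) := by
          apply Finset.sum_le_sum
          intro y _
          exact hup n₀ (le_refl n₀) y
      _ = (S.card : ℝ) * ((β + η) * (2*(n₀:ℝ)+1)^d) := by
          rw [Finset.sum_const, nsmul_eq_mul]
  have hc2 : (S.card : ℝ) * (2*(n₀:ℝ)+1)^d ≤ (cnt (B + cube d (2*n₀)) (n + 2*n₀) x_B : ℝ) := by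
    calc (S.card : ℝ) * (2*(n₀:ℝ)+1)^d = ((S.card * (2*n₀+1)^d : ℕ) : ℝ) := by push_cast; ring
      _ ≤ _ := by exact_mod_cast h2
  have hr : (1 - δ/2) * (2*((n + 2*n₀ : ℕ):ℝ)+1)^d ≤ (2*(n:ℝ)+1)^d := by
    apply cube_ratio d (Nat.le_add_right n (2*n₀)) (by linarith)
    push_cast
    have hnn₁ : (n₁:ℝ) ≤ (n:ℝ) := by
      exact_mod_cast le_trans (le_trans (le_max_right K n₁) (le_max_left _ n₀)) hnge
    have h4 : 4*(d:ℝ)*n₀ ≤ (n:ℝ) * δ := by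
      rw [div_le_iff₀ hδ0] at hn₁
      calc 4*(d:ℝ)*n₀ ≤ (n₁:ℝ) * δ := hn₁
        _ ≤ (n:ℝ) * δ := mul_le_mul_of_nonneg_right hnn₁ hδ0.le
    nlinarith [(Nat.cast_nonneg n₀ : (0:ℝ) ≤ (n₀:ℝ))]
  have hX : (0:ℝ) < (2*((n + 2*n₀ : ℕ):ℝ)+1)^d := by positivity
  have hxB' : (β - η) * (2*(n:ℝ)+1)^d ≤ (cnt B n x_B : ℝ) := hxB.le
  have e1 : (β - η) * ((1 - δ/2) * (2*((n + 2*n₀ : ℕ):ℝ)+1)^d) ≤ (β - η) * (2*(n:ℝ)+1)^d := by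
    apply mul_le_mul_of_nonneg_left hr
    rw [hηdef]
    nlinarith [mul_le_mul_of_nonneg_left hδ2 hβpos.le]
  have e2 : (1 - δ) * ((β + η)) ≤ (β - η) * (1 - δ/2) := by
    rw [hηdef]
    nlinarith [mul_nonneg hβpos.le (mul_nonneg hδ0.le hδ0.le)]
  have hp : (0:ℝ) < β + η := by rw [hηdef]; positivity
  have hkey : (1 - δ) * (2*((n + 2*n₀ : ℕ):ℝ)+1)^d * (β + η) ≤
      ((S.card : ℝ) * (2*(n₀:ℝ)+1)^d) * (β + η) := by
    calc (1 - δ) * (2*((n + 2*n₀ : ℕ):ℝ)+1)^d * (β + η)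
        = ((1-δ)*(β+η)) * (2*((n + 2*n₀ : ℕ):ℝ)+1)^d := by ring
      _ ≤ ((β-η)*(1-δ/2)) * (2*((n + 2*n₀ : ℕ):ℝ)+1)^d :=
          mul_le_mul_of_nonneg_right e2 hX.le
      _ = (β-η)*((1-δ/2) * (2*((n + 2*n₀ : ℕ):ℝ)+1)^d) := by ring
      _ ≤ (β - η) * (2*(n:ℝ)+1)^d := e1
      _ ≤ (cnt B n x_B : ℝ) := hxB'
      _ ≤ (S.card : ℝ) * ((β + η) * (2*(n₀:ℝ)+1)^d) := hc1
      _ = ((S.card : ℝ) * (2*(n₀:ℝ)+1)^d) * (β + η) := by ring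
  calc (1 - δ) * (2*((n + 2*n₀ : ℕ):ℝ)+1)^d
      ≤ (S.card : ℝ) * (2*(n₀:ℝ)+1)^d := le_of_mul_le_mul_right hkey hp
    _ ≤ _ := hc2

/-! ### The Markov / double counting lower bound -/

lemma markov_lower (A : Set (Fin d → ℤ)) (M V N₁ N : ℕ) (v : Fin d → ℤ)
    (hV : ∀ i, -(V:ℤ) ≤ v i ∧ v i ≤ V) (hN : N₁ + (M + V) = N) :
    cnt A N₁ 0 * (2*M+1)^d ≤ ∑ z ∈ windowF (0 : Fin d → ℤ) N, cnt A M (z - v) := by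
  classical
  have step1 : ∀ z : Fin d → ℤ,
      ((windowF (0 : Fin d → ℤ) N₁).filter
        (fun a => a ∈ A ∧ z ∈ windowF (a + v) M)).card ≤ cnt A M (z - v) := by
    intro z
    rw [cnt_eq_card]
    apply Finset.card_le_card
    intro a ha
    rw [Finset.mem_filter] at ha ⊢
    obtain ⟨haw, haA, hz⟩ := ha
    refine ⟨?_, haA⟩
    rw [mem_windowF] at hz ⊢
    intro i
    have := hz i
    simp only [Pi.add_apply, Pi.sub_apply] at this ⊢
    omega
  have step2 : ∑ z ∈ windowF (0 : Fin d → ℤ) N,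
      ((windowF (0 : Fin d → ℤ) N₁).filter
        (fun a => a ∈ A ∧ z ∈ windowF (a + v) M)).card
      = ∑ a ∈ (windowF (0 : Fin d → ℤ) N₁).filter (fun a => a ∈ A),
          ((windowF (0 : Fin d → ℤ) N).filter (fun z => z ∈ windowF (a + v) M)).card := by
    simp only [Finset.card_filter]
    rw [Finset.sum_comm]
    rw [Finset.sum_filter]
    apply Finset.sum_congr rfl
    intro a _
    by_cases haA : a ∈ A
    · simp [haA]
    · simp [haA]
  have step3 : ∀ a ∈ (windowF (0 : Fin d → ℤ) N₁).filter (fun a => a ∈ A),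
      ((windowF (0 : Fin d → ℤ) N).filter (fun z => z ∈ windowF (a + v) M)).card
        = (2*M+1)^d := by
    intro a ha
    rw [Finset.mem_filter] at ha
    rw [Finset.filter_mem_eq_inter, Finset.inter_eq_right.mpr, card_windowF]
    intro w hw
    rw [mem_windowF] at hw ⊢
    intro i
    have h1 := hw i
    have h2 := (mem_windowF.mp ha.1) i
    have h3 := hV i
    simp only [Pi.add_apply, Pi.zero_apply] at h1 h2 ⊢
    omega
  calc cnt A N₁ 0 * (2*M+1)^d
      = ∑ _a ∈ (windowF (0 : Fin d → ℤ) N₁).filter (fun a => a ∈ A), (2*M+1)^d := by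
        rw [Finset.sum_const, cnt_eq_card, smul_eq_mul]
    _ = ∑ a ∈ (windowF (0 : Fin d → ℤ) N₁).filter (fun a => a ∈ A),
          ((windowF (0 : Fin d → ℤ) N).filter (fun z => z ∈ windowF (a + v) M)).card :=
        (Finset.sum_congr rfl step3).symm
    _ = ∑ z ∈ windowF (0 : Fin d → ℤ) N,
          ((windowF (0 : Fin d → ℤ) N₁).filter
            (fun a => a ∈ A ∧ z ∈ windowF (a + v) M)).card := step2.symm
    _ ≤ _ := Finset.sum_le_sum (fun z _ => step1 z)

end SumsetAux

set_option maxHeartbeats 1000000 in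
theorem stmt_2 (d : ℕ) (hd : 1 ≤ d) (A B : Set (Fin d → ℤ)) (α : ℝ)
    (hA : lowerDensity d A = α) (hα : 0 < α) (hB : 0 < banachDensity d B) :
    ∀ ε : ℝ, 0 < ε → ∃ m : ℕ, ∀ k : ℕ,
      α - ε ≤ lowerDensity d {z : Fin d → ℤ | cubeAt d k z ⊆ A + B + cube d m} := by
  intro ε hε
  classical
  have hα1 : α ≤ 1 := SumsetAux.alpha_le_one hA
  obtain ⟨δ, hδ0, hδε, hδ2⟩ : ∃ δ : ℝ, 0 < δ ∧ δ ≤ ε/4 ∧ δ ≤ 1/2 :=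
    ⟨min (ε/4) (1/2), lt_min (by linarith) (by norm_num), min_le_left _ _, min_le_right _ _⟩
  obtain ⟨m₀, hL⟩ := SumsetAux.lemL rfl hB hδ0 hδ2
  refine ⟨m₀, fun k => ?_⟩
  obtain ⟨n₁, hn₁⟩ := exists_nat_ge ((d:ℝ)*(k:ℝ)/δ)
  obtain ⟨n', hn'ge, x', hx'⟩ := hL n₁
  set M₀ := n' + k with hM₀
  set G : Set (Fin d → ℤ) := {z | cubeAt d k z ⊆ A + B + cube d m₀} with hGdef
  have hρ : (1 - δ) * (2*(M₀:ℝ)+1)^d ≤ (2*(n':ℝ)+1)^d := by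
    apply SumsetAux.cube_ratio d (Nat.le_add_right n' k) hδ0.le
    have hn'₁ : (n₁:ℝ) ≤ (n':ℝ) := by exact_mod_cast hn'ge
    rw [div_le_iff₀ hδ0] at hn₁
    push_cast [hM₀]
    nlinarith [(Nat.cast_nonneg k : (0:ℝ) ≤ (k:ℝ)), (Nat.cast_nonneg d : (0:ℝ) ≤ (d:ℝ)),
      mul_le_mul_of_nonneg_right hn'₁ hδ0.le]
  have hXpos : (0:ℝ) < (2*(M₀:ℝ)+1)^d := by positivity
  -- every bad `z` sees only few points of `A` in the `M₀`-window at `z - x'`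
  have sparse : ∀ z : Fin d → ℤ, z ∉ G →
      (SumsetAux.cnt A M₀ (z - x') : ℝ) ≤ 2*δ*(2*(M₀:ℝ)+1)^d := by
    intro z hz
    rw [hGdef, Set.mem_setOf_eq] at hz
    obtain ⟨y, hyz, hyS⟩ := Set.not_subset.mp hz
    have hdisj : ∀ w, w ∈ {w : Fin d → ℤ | y - w ∈ A} → w ∉ (B + cube d m₀) := by
      intro w hw hwB
      apply hyS
      have hy : y = (y - w) + w := by ring
      rw [hy, add_assoc]
      exact Set.add_mem_add hw hwB
    have hcnt1 := SumsetAux.cnt_add_le_of_disjoint hdisj n' x'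
    have hrefl := SumsetAux.cnt_reflect A n' x' y
    have hsub : SumsetAux.windowF (y - x') n' ⊆ SumsetAux.windowF (z - x') M₀ := by
      apply SumsetAux.windowF_subset
      intro i
      rw [cubeAt, Set.mem_Icc, Pi.le_def, Pi.le_def] at hyz
      have h1 := hyz.1 i
      have h2 := hyz.2 i
      simp only [Pi.sub_apply]
      push_cast [hM₀]
      push_cast at h1 h2
      omega
    have h3 := SumsetAux.cnt_ge_of_window_subset (A := A) hsub
    have hle : (2*n'+1)^d ≤ (2*M₀+1)^d := Nat.pow_le_pow_left (by omega) d
    have hE : (1-δ) * (2*(n':ℝ)+1)^d ≤ (SumsetAux.cnt (B + cube d m₀) n' x' : ℝ) := hx'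
    have c1 : (SumsetAux.cnt {w : Fin d → ℤ | y - w ∈ A} n' x' : ℝ)
        + (SumsetAux.cnt (B + cube d m₀) n' x' : ℝ) ≤ (2*(n':ℝ)+1)^d := by
      have hc := (Nat.cast_le (α := ℝ)).mpr hcnt1
      push_cast at hc
      linarith
    have c2 : (SumsetAux.cnt A n' (y - x') : ℝ) ≤ δ * (2*(n':ℝ)+1)^d := by
      rw [hrefl]
      push_cast
      linarith
    have c3 : (SumsetAux.cnt A M₀ (z - x') : ℝ) ≤ (SumsetAux.cnt A n' (y - x') : ℝ)
        + ((2*(M₀:ℝ)+1)^d - (2*(n':ℝ)+1)^d) := by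
      have hc := (Nat.cast_le (α := ℝ)).mpr h3
      push_cast [Nat.cast_sub hle] at hc
      linarith
    nlinarith [mul_le_mul_of_nonneg_left hρ (by linarith : (0:ℝ) ≤ 1-δ)]
  -- bound on the translation vector
  obtain ⟨V, hV⟩ : ∃ V : ℕ, ∀ i, -(V:ℤ) ≤ x' i ∧ x' i ≤ V := by
    refine ⟨Finset.univ.sup (fun i => (x' i).natAbs), fun i => ?_⟩
    have h2 : (x' i).natAbs ≤ Finset.univ.sup (fun i => (x' i).natAbs) :=
      Finset.le_sup (f := fun i => (x' i).natAbs) (Finset.mem_univ i)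
    omega
  -- eventual lower bound for the good set count
  have hev : ∀ᶠ N : ℕ in atTop, (α - ε) * (2*(N:ℝ)+1)^d ≤ (SumsetAux.cnt G N 0 : ℝ) := by
    have hA2 : ∀ᶠ N : ℕ in atTop,
        (α - δ)*(2*((N - (M₀+V) : ℕ):ℝ)+1)^d ≤ (SumsetAux.cnt A (N - (M₀+V)) 0 : ℝ) :=
      (tendsto_sub_atTop_nat (M₀+V)).eventually (SumsetAux.eventually_count_lower hA hδ0)
    obtain ⟨N₂, hN₂⟩ := exists_nat_ge ((d:ℝ)*((M₀:ℝ)+(V:ℝ))/δ)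
    filter_upwards [hA2, eventually_ge_atTop (max N₂ (M₀ + V))] with N hN hNge
    obtain ⟨N₁, hN₁def⟩ : ∃ N₁, N₁ = N - (M₀ + V) := ⟨_, rfl⟩
    rw [← hN₁def] at hN
    have hNsum : N₁ + (M₀ + V) = N := by
      rw [hN₁def]
      exact Nat.sub_add_cancel (le_trans (le_max_right _ _) hNge)
    have hmk := SumsetAux.markov_lower A M₀ V N₁ N x' hV hNsum
    -- upper bound for the double-counting sum
    have hsplit := Finset.sum_filter_add_sum_filter_not
      (SumsetAux.windowF (0 : Fin d → ℤ) N) (fun z => z ∈ G)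
      (fun z => (SumsetAux.cnt A M₀ (z - x') : ℝ))
    have hub1 : ∑ z ∈ (SumsetAux.windowF (0 : Fin d → ℤ) N).filter (fun z => z ∈ G),
        (SumsetAux.cnt A M₀ (z - x') : ℝ) ≤ (SumsetAux.cnt G N 0 : ℝ) * (2*(M₀:ℝ)+1)^d := by
      calc ∑ z ∈ (SumsetAux.windowF (0 : Fin d → ℤ) N).filter (fun z => z ∈ G),
            (SumsetAux.cnt A M₀ (z - x') : ℝ)
          ≤ ∑ _z ∈ (SumsetAux.windowF (0 : Fin d → ℤ) N).filter (fun z => z ∈ G),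
            (2*(M₀:ℝ)+1)^d :=
            Finset.sum_le_sum (fun z _ => SumsetAux.cnt_le_real A M₀ (z - x'))
        _ = _ := by
            rw [Finset.sum_const, nsmul_eq_mul, SumsetAux.cnt_eq_card]
    have hub2 : ∑ z ∈ (SumsetAux.windowF (0 : Fin d → ℤ) N).filter (fun z => ¬ (z ∈ G)),
        (SumsetAux.cnt A M₀ (z - x') : ℝ) ≤ (2*(N:ℝ)+1)^d * (2*δ*(2*(M₀:ℝ)+1)^d) := by
      calc ∑ z ∈ (SumsetAux.windowF (0 : Fin d → ℤ) N).filter (fun z => ¬ (z ∈ G)),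
            (SumsetAux.cnt A M₀ (z - x') : ℝ)
          ≤ ∑ _z ∈ (SumsetAux.windowF (0 : Fin d → ℤ) N).filter (fun z => ¬ (z ∈ G)),
            (2*δ*(2*(M₀:ℝ)+1)^d) := by
            apply Finset.sum_le_sum
            intro z hzf
            exact sparse z (Finset.mem_filter.mp hzf).2
        _ = (((SumsetAux.windowF (0 : Fin d → ℤ) N).filter (fun z => ¬ (z ∈ G))).card : ℝ)
              * (2*δ*(2*(M₀:ℝ)+1)^d) := by
            rw [Finset.sum_const, nsmul_eq_mul]
        _ ≤ (2*(N:ℝ)+1)^d * (2*δ*(2*(M₀:ℝ)+1)^d) := by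
            apply mul_le_mul_of_nonneg_right _ (by positivity)
            calc (((SumsetAux.windowF (0 : Fin d → ℤ) N).filter (fun z => ¬ (z ∈ G))).card : ℝ)
                ≤ ((SumsetAux.windowF (0 : Fin d → ℤ) N).card : ℝ) := by
                  exact_mod_cast Finset.card_filter_le _ _
              _ = (2*(N:ℝ)+1)^d := by
                  rw [SumsetAux.card_windowF]
                  push_cast
                  ring
    have hlow : (SumsetAux.cnt A N₁ 0 : ℝ) * (2*(M₀:ℝ)+1)^d ≤
        ∑ z ∈ SumsetAux.windowF (0 : Fin d → ℤ) N, (SumsetAux.cnt A M₀ (z - x') : ℝ) := by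
      have hc := (Nat.cast_le (α := ℝ)).mpr hmk
      push_cast at hc
      exact hc
    have key : (SumsetAux.cnt A N₁ 0 : ℝ) ≤ (SumsetAux.cnt G N 0 : ℝ) + 2*δ*(2*(N:ℝ)+1)^d := by
      have h5 : (SumsetAux.cnt A N₁ 0 : ℝ) * (2*(M₀:ℝ)+1)^d ≤
          ((SumsetAux.cnt G N 0 : ℝ) + 2*δ*(2*(N:ℝ)+1)^d) * (2*(M₀:ℝ)+1)^d := by
        calc (SumsetAux.cnt A N₁ 0 : ℝ) * (2*(M₀:ℝ)+1)^d
            ≤ ∑ z ∈ SumsetAux.windowF (0 : Fin d → ℤ) N,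
              (SumsetAux.cnt A M₀ (z - x') : ℝ) := hlow
          _ = _ + _ := hsplit.symm
          _ ≤ (SumsetAux.cnt G N 0 : ℝ) * (2*(M₀:ℝ)+1)^d
              + (2*(N:ℝ)+1)^d * (2*δ*(2*(M₀:ℝ)+1)^d) := add_le_add hub1 hub2
          _ = ((SumsetAux.cnt G N 0 : ℝ) + 2*δ*(2*(N:ℝ)+1)^d) * (2*(M₀:ℝ)+1)^d := by ring
      exact le_of_mul_le_mul_right h5 hXpos
    -- ratio between the windows N₁ and N
    have hrat : (1 - δ) * (2*(N:ℝ)+1)^d ≤ (2*((N₁:ℕ):ℝ)+1)^d := by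
      apply SumsetAux.cube_ratio d (by omega : N₁ ≤ N) hδ0.le
      rw [div_le_iff₀ hδ0] at hN₂
      have hNN₂ : (N₂:ℝ) ≤ (N:ℝ) := by
        exact_mod_cast le_trans (le_max_left _ _) hNge
      have e : (N:ℝ) - (N₁:ℝ) = (M₀:ℝ) + (V:ℝ) := by
        have := hNsum
        push_cast [← this]
        ring
      nlinarith [(Nat.cast_nonneg N : (0:ℝ) ≤ (N:ℝ)), mul_le_mul_of_nonneg_right hNN₂ hδ0.le]
    have hle2 : (2*((N₁:ℕ):ℝ)+1)^d ≤ (2*(N:ℝ)+1)^d := by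
      apply pow_le_pow_left₀ (by positivity)
      have : (N₁:ℝ) ≤ (N:ℝ) := by exact_mod_cast (by omega : N₁ ≤ N)
      linarith
    -- combine
    have hmid : (α - 2*δ) * (2*(N:ℝ)+1)^d ≤ (α - δ) * (2*((N₁:ℕ):ℝ)+1)^d := by
      rcases le_or_gt 0 (α - δ) with hs | hs
      · calc (α - 2*δ) * (2*(N:ℝ)+1)^d ≤ ((α - δ)*(1-δ)) * (2*(N:ℝ)+1)^d := by
              apply mul_le_mul_of_nonneg_right _ (by positivity)
              nlinarith
          _ = (α - δ) * ((1-δ) * (2*(N:ℝ)+1)^d) := by ring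
          _ ≤ (α - δ) * (2*((N₁:ℕ):ℝ)+1)^d := mul_le_mul_of_nonneg_left hrat hs
      · calc (α - 2*δ) * (2*(N:ℝ)+1)^d ≤ (α - δ) * (2*(N:ℝ)+1)^d := by
              apply mul_le_mul_of_nonneg_right _ (by positivity)
              linarith
          _ ≤ (α - δ) * (2*((N₁:ℕ):ℝ)+1)^d :=
              mul_le_mul_of_nonpos_left hle2 hs.le
    have hfin : (α - ε) * (2*(N:ℝ)+1)^d ≤ (α - 4*δ) * (2*(N:ℝ)+1)^d := by
      apply mul_le_mul_of_nonneg_right _ (by positivity)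
      linarith
    calc (α - ε) * (2*(N:ℝ)+1)^d ≤ (α - 4*δ) * (2*(N:ℝ)+1)^d := hfin
      _ = (α - 2*δ) * (2*(N:ℝ)+1)^d - 2*δ*(2*(N:ℝ)+1)^d := by ring
      _ ≤ (α - δ) * (2*((N₁:ℕ):ℝ)+1)^d - 2*δ*(2*(N:ℝ)+1)^d := by linarith
      _ ≤ (SumsetAux.cnt A N₁ 0 : ℝ) - 2*δ*(2*(N:ℝ)+1)^d := by linarith
      _ ≤ (SumsetAux.cnt G N 0 : ℝ) := by linarith
  -- conclude via liminf
  show α - ε ≤ lowerDensity d G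
  rw [SumsetAux.lowerDensity_eq]
  apply le_liminf_of_le
  · exact Filter.isCoboundedUnder_ge_of_eventually_le atTop (x := 1)
      (Filter.Eventually.of_forall (fun n => SumsetAux.density_ratio_le_one G n))
  · filter_upwards [hev] with N hN2
    rw [le_div_iff₀ (by positivity : (0:ℝ) < (2*(N:ℝ)+1)^d)]
    exact hN2
end

section
/- Suppose m ∈ ℕ, X is a finite set, and (T_i)_{i<n} is a finite collection of subsets of X such that for every x ∈ X, 1 ≤ Σ_{i<n} χ_{T_i}(x) ≤ m, where χ_{T_i} is the characteristic function of T_i. If t ∈ (0,1) and E ⊆ X satisfies |T_i ∩ E| / |T_i| ≤ t for every i < n, then |E| / |X| ≤ m·t / (1 + (m−1)·t). -/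
theorem stmt_8 {α : Type*} [DecidableEq α] (m n : ℕ) (X : Finset α)
    (T : Fin n → Finset α) (hTX : ∀ i, T i ⊆ X) (hTne : ∀ i, (T i).Nonempty)
    (hcover : ∀ x ∈ X,
      1 ≤ ∑ i : Fin n, (if x ∈ T i then 1 else 0) ∧
      ∑ i : Fin n, (if x ∈ T i then 1 else 0) ≤ m)
    (t : ℝ) (ht : t ∈ Set.Ioo (0 : ℝ) 1) (E : Finset α) (hE : E ⊆ X)
    (hcount : ∀ i, ((T i ∩ E).card : ℝ) / (T i).card ≤ t) :
    (E.card : ℝ) / X.card ≤ (m : ℝ) * t / (1 + ((m : ℝ) - 1) * t) := by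
  obtain ⟨ht0, ht1⟩ := ht
  set c : α → ℕ := fun x => ∑ i : Fin n, (if x ∈ T i then 1 else 0) with hc
  have hswap : ∀ S : Finset α,
      ∑ i : Fin n, (S.filter (· ∈ T i)).card = ∑ x ∈ S, c x := by
    intro S
    simp only [Finset.card_filter, hc]
    exact Finset.sum_comm
  have hTiE : ∀ i, T i ∩ E = E.filter (· ∈ T i) := by
    intro i; rw [Finset.filter_mem_eq_inter, Finset.inter_comm]
  have hTi : ∀ i, T i = X.filter (· ∈ T i) := by
    intro i
    rw [Finset.filter_mem_eq_inter, Finset.inter_comm,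
      Finset.inter_eq_left.mpr (hTX i)]
  have hdenom : (0:ℝ) < 1 + ((m : ℝ) - 1) * t := by nlinarith
  rcases Finset.eq_empty_or_nonempty X with hXe | hXne
  · have hEe : E = ∅ := Finset.subset_empty.mp (hXe ▸ hE)
    rw [hXe, hEe]
    simp only [Finset.card_empty, Nat.cast_zero, zero_div]
    positivity
  · -- A = sum over E of c, B = sum over X \ E
    have h1 : ∀ i, ((T i ∩ E).card : ℝ) ≤ t * (T i).card := by
      intro i
      have hpos : (0:ℝ) < (T i).card := by
        exact_mod_cast Finset.card_pos.mpr (hTne i)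
      have h := hcount i
      rw [div_le_iff₀ hpos] at h
      linarith
    have hA : ((∑ x ∈ E, c x : ℕ) : ℝ) ≤ t * ((∑ x ∈ X, c x : ℕ) : ℝ) := by
      rw [← hswap E, ← hswap X]
      push_cast
      calc ∑ i : Fin n, ((E.filter (· ∈ T i)).card : ℝ)
          ≤ ∑ i : Fin n, t * ((X.filter (· ∈ T i)).card : ℝ) := by
            apply Finset.sum_le_sum
            intro i _
            rw [← hTiE i, ← hTi i]
            exact h1 i
        _ = t * ∑ i : Fin n, ((X.filter (· ∈ T i)).card : ℝ) := by
            rw [Finset.mul_sum]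
    have hsplit : ∑ x ∈ X, c x = ∑ x ∈ E, c x + ∑ x ∈ X \ E, c x := by
      rw [← Finset.sum_sdiff hE]; ring
    have hEA : (E.card : ℕ) ≤ ∑ x ∈ E, c x := by
      calc E.card = ∑ _x ∈ E, 1 := by simp
        _ ≤ ∑ x ∈ E, c x := Finset.sum_le_sum fun x hx => (hcover x (hE hx)).1
    have hB : ∑ x ∈ X \ E, c x ≤ m * (X \ E).card := by
      calc ∑ x ∈ X \ E, c x ≤ ∑ _x ∈ X \ E, m :=
            Finset.sum_le_sum fun x hx => (hcover x (Finset.mem_sdiff.mp hx).1).2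
        _ = m * (X \ E).card := by rw [Finset.sum_const, smul_eq_mul, mul_comm]
    have hcard : (X \ E).card = X.card - E.card := Finset.card_sdiff_of_subset hE
    have hEX : E.card ≤ X.card := Finset.card_le_card hE
    -- real versions
    set A : ℝ := ((∑ x ∈ E, c x : ℕ) : ℝ) with hAdef
    set B : ℝ := ((∑ x ∈ X \ E, c x : ℕ) : ℝ) with hBdef
    have hAtB : A ≤ t * (A + B) := by
      have : ((∑ x ∈ X, c x : ℕ) : ℝ) = A + B := by
        rw [hAdef, hBdef, hsplit]; push_cast; ring
      rw [← this]; exact hA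
    have hEA' : (E.card : ℝ) ≤ A := by rw [hAdef]; exact_mod_cast hEA
    have hB' : B ≤ (m : ℝ) * ((X.card : ℝ) - E.card) := by
      have : ((m * (X \ E).card : ℕ) : ℝ) = (m : ℝ) * ((X.card : ℝ) - E.card) := by
        rw [hcard]; push_cast [hEX]; ring
      rw [hBdef, ← this]
      exact_mod_cast hB
    have hXpos : (0:ℝ) < X.card := by exact_mod_cast Finset.card_pos.mpr hXne
    rw [div_le_div_iff₀ hXpos hdenom]
    nlinarith [mul_le_mul_of_nonneg_left hEA' (le_of_lt (by linarith : (0:ℝ) < 1 - t))]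
end

section
/- Let d ≥ 1 and A ⊆ ℤ^d. Then the limits lim_{i→∞} d_(A_{[i]}), lim_{i→∞} d_(A^{[i]}), and lim_{i→∞} d_(A + [-i,i]^d) all exist and are equal. -/
open Filter Pointwise

/-- The `n`-block set `A_{[n]} = {x : (n·x + [0, n-1]^d) ∩ A ≠ ∅}`. -/
def blockSet (d : ℕ) (A : Set (Fin d → ℤ)) (n : ℕ) : Set (Fin d → ℤ) :=
  {x | ∃ t ∈ Set.Icc (0 : Fin d → ℤ) (fun _ => (n : ℤ) - 1), (n : ℤ) • x + t ∈ A}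

/-- The set `A^{[n]} = n·A_{[n]} + [0, n-1]^d`. -/
def superBlockSet (d : ℕ) (A : Set (Fin d → ℤ)) (n : ℕ) : Set (Fin d → ℤ) :=
  {w | ∃ x ∈ blockSet d A n,
    ∃ t ∈ Set.Icc (0 : Fin d → ℤ) (fun _ => (n : ℤ) - 1), w = (n : ℤ) • x + t}

namespace Stmt14

variable {d : ℕ} {A : Set (Fin d → ℤ)} {n : ℕ}

lemma cube_finite (d m : ℕ) : (cube d m).Finite := Set.finite_Icc _ _

lemma mem_cube {m : ℕ} {x : Fin d → ℤ} :
    x ∈ cube d m ↔ ∀ j, -(m:ℤ) ≤ x j ∧ x j ≤ m := by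
  simp [cube, Set.mem_Icc, Pi.le_def, forall_and]

lemma cube_mono {a b : ℕ} (h : a ≤ b) : cube d a ⊆ cube d b := by
  intro x hx
  rw [mem_cube] at hx ⊢
  intro j
  have h2 : (a:ℤ) ≤ b := by exact_mod_cast h
  exact ⟨by linarith [(hx j).1], by linarith [(hx j).2]⟩

lemma ncard_Icc_pi (lo hi : Fin d → ℤ) :
    (Set.Icc lo hi).ncard = ∏ j, (hi j + 1 - lo j).toNat := by
  rw [← Finset.coe_Icc, Set.ncard_coe_finset, Pi.card_Icc]
  simp [Int.card_Icc]

lemma ncard_cube (d m : ℕ) : (cube d m).ncard = (2*m+1)^d := by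
  rw [cube, ncard_Icc_pi]
  have h : ((m:ℤ) + 1 - (-(m:ℤ))).toNat = 2*m+1 := by omega
  rw [Finset.prod_congr rfl fun (j : Fin d) _ => h]
  simp

/-- the block of `x` -/
def blk (d n : ℕ) (x : Fin d → ℤ) : Set (Fin d → ℤ) :=
  Set.Icc ((n:ℤ) • x) ((n:ℤ) • x + fun _ => (n:ℤ) - 1)

lemma mem_blk {x w : Fin d → ℤ} :
    w ∈ blk d n x ↔ ∀ j, (n:ℤ) * x j ≤ w j ∧ w j ≤ n * x j + ((n:ℤ) - 1) := by
  simp [blk, Set.mem_Icc, Pi.le_def, forall_and]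

lemma blk_finite (x : Fin d → ℤ) : (blk d n x).Finite := Set.finite_Icc _ _

lemma ncard_blk (x : Fin d → ℤ) : (blk d n x).ncard = n^d := by
  rw [blk, ncard_Icc_pi]
  have h : ∀ j : Fin d, ((((n:ℤ) • x + fun _ => (n:ℤ) - 1) : Fin d → ℤ) j + 1 - ((n:ℤ) • x) j).toNat = n := by
    intro j
    simp only [Pi.add_apply, Pi.smul_apply, smul_eq_mul]
    omega
  rw [Finset.prod_congr rfl fun j _ => h j]
  simp

lemma mem_superBlockSet {w : Fin d → ℤ} :
    w ∈ superBlockSet d A n ↔ ∃ x ∈ blockSet d A n, w ∈ blk d n x := by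
  constructor
  · rintro ⟨x, hx, t, ht, rfl⟩
    refine ⟨x, hx, ?_⟩
    rw [mem_blk]
    intro j
    rw [Set.mem_Icc] at ht
    have h2 : (0:ℤ) ≤ t j := ht.1 j
    have h3 : t j ≤ (n:ℤ) - 1 := ht.2 j
    simp only [Pi.add_apply, Pi.smul_apply, smul_eq_mul]
    omega
  · rintro ⟨x, hx, hw⟩
    rw [mem_blk] at hw
    refine ⟨x, hx, fun j => w j - n * x j, ?_, ?_⟩
    · rw [Set.mem_Icc]
      constructor
      · intro j
        show (0:ℤ) ≤ w j - n * x j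
        have := (hw j).1; omega
      · intro j
        show w j - (n:ℤ) * x j ≤ (n:ℤ) - 1
        have := (hw j).2; omega
    · funext j
      show w j = (n:ℤ) * x j + (w j - n * x j)
      ring

lemma mem_blockSet_iff {x : Fin d → ℤ} :
    x ∈ blockSet d A n ↔ ∃ a ∈ A, a ∈ blk d n x := by
  constructor
  · rintro ⟨t, ht, ha⟩
    refine ⟨_, ha, ?_⟩
    rw [mem_blk]
    intro j
    rw [Set.mem_Icc] at ht
    have h2 : (0:ℤ) ≤ t j := ht.1 j
    have h3 : t j ≤ (n:ℤ) - 1 := ht.2 j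
    simp only [Pi.add_apply, Pi.smul_apply, smul_eq_mul]
    omega
  · rintro ⟨a, ha, hblk⟩
    rw [mem_blk] at hblk
    refine ⟨fun j => a j - n * x j, ?_, ?_⟩
    · rw [Set.mem_Icc]
      constructor
      · intro j
        show (0:ℤ) ≤ a j - n * x j
        have := (hblk j).1; omega
      · intro j
        show a j - (n:ℤ) * x j ≤ (n:ℤ) - 1
        have := (hblk j).2; omega
    · have : (n:ℤ) • x + (fun j => a j - n * x j) = a := by
        funext j
        show (n:ℤ) * x j + (a j - n * x j) = a j
        ring
      rw [this]
      exact ha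

section Count
variable {α β : Type*}

lemma card_le_of_cover {s : Set α} {u : Set β}
    (hs : s.Finite) (hu : u.Finite) (g : β → Set α) (k : ℕ)
    (hg : ∀ b ∈ u, (g b).Finite ∧ (g b).ncard ≤ k)
    (hcov : ∀ a ∈ s, ∃ b ∈ u, a ∈ g b) : s.ncard ≤ k * u.ncard := by
  classical
  rcases s.eq_empty_or_nonempty with rfl | ⟨a₀, ha₀⟩
  · simp
  obtain ⟨b₀, -, -⟩ := hcov a₀ ha₀
  have hcov' : ∀ a : α, ∃ b : β, a ∈ s → b ∈ u ∧ a ∈ g b := by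
    intro a
    by_cases h : a ∈ s
    · obtain ⟨b, hb, hab⟩ := hcov a h
      exact ⟨b, fun _ => ⟨hb, hab⟩⟩
    · exact ⟨b₀, fun h' => absurd h' h⟩
  choose f hf using hcov'
  set F := hs.toFinset with hF
  rw [Set.ncard_eq_toFinset_card s hs, Finset.card_eq_sum_card_image f F]
  have h1 : ∀ b ∈ F.image f, (F.filter (fun a => f a = b)).card ≤ k := by
    intro b hb
    obtain ⟨a, haF, rfl⟩ := Finset.mem_image.1 hb
    have haS : a ∈ s := hs.mem_toFinset.1 haF
    have hbu : f a ∈ u := (hf a haS).1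
    have hgb := hg _ hbu
    calc (F.filter (fun a' => f a' = f a)).card
        = (↑(F.filter (fun a' => f a' = f a)) : Set α).ncard := (Set.ncard_coe_finset _).symm
      _ ≤ (g (f a)).ncard := by
          apply Set.ncard_le_ncard _ hgb.1
          intro x hx
          simp only [Finset.coe_filter, Set.mem_setOf_eq] at hx
          obtain ⟨hxF, hxe⟩ := hx
          have := (hf x (hs.mem_toFinset.1 hxF)).2
          rwa [hxe] at this
      _ ≤ k := hgb.2
  calc ∑ b ∈ F.image f, (F.filter (fun a => f a = b)).card
      ≤ (F.image f).card * k := by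
        have := Finset.sum_le_card_nsmul (F.image f) _ k h1
        simpa [smul_eq_mul] using this
    _ ≤ u.ncard * k := by
        apply Nat.mul_le_mul_right
        rw [Set.ncard_eq_toFinset_card u hu]
        apply Finset.card_le_card
        intro b hb
        obtain ⟨a, haF, rfl⟩ := Finset.mem_image.1 hb
        exact hu.mem_toFinset.2 (hf a (hs.mem_toFinset.1 haF)).1
    _ = k * u.ncard := Nat.mul_comm _ _

lemma card_ge_of_disjoint {s : Set α} {u : Set β}
    (hs : s.Finite) (hu : u.Finite) (g : β → Set α) (k : ℕ)
    (hg : ∀ b ∈ u, k ≤ (g b).ncard)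
    (hsub : ∀ b ∈ u, g b ⊆ s)
    (hdisj : ∀ b ∈ u, ∀ b' ∈ u, b ≠ b' → Disjoint (g b) (g b')) :
    k * u.ncard ≤ s.ncard := by
  classical
  set F := hs.toFinset with hF
  set U := hu.toFinset with hU
  set G : β → Finset α := fun b => F.filter (· ∈ g b) with hG
  have hGcoe : ∀ b ∈ U, (↑(G b) : Set α) = g b := by
    intro b hb
    ext x
    simp only [hG, Finset.coe_filter, Set.mem_setOf_eq]
    constructor
    · rintro ⟨-, h⟩; exact h
    · intro h
      exact ⟨hs.mem_toFinset.2 (hsub b (hu.mem_toFinset.1 hb) h), h⟩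
  have hdisjF : ∀ b ∈ U, ∀ b' ∈ U, b ≠ b' → Disjoint (G b) (G b') := by
    intro b hb b' hb' hne
    rw [← Finset.disjoint_coe, hGcoe b hb, hGcoe b' hb']
    exact hdisj b (hu.mem_toFinset.1 hb) b' (hu.mem_toFinset.1 hb') hne
  have hsum : (U.biUnion G).card = ∑ b ∈ U, (G b).card := Finset.card_biUnion hdisjF
  calc k * u.ncard = U.card * k := by
        rw [Set.ncard_eq_toFinset_card u hu]; ring
    _ ≤ ∑ b ∈ U, (G b).card := by
        have : ∀ b ∈ U, k ≤ (G b).card := by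
          intro b hb
          have : (G b).card = (g b).ncard := by
            rw [← hGcoe b hb, Set.ncard_coe_finset]
          rw [this]
          exact hg b (hu.mem_toFinset.1 hb)
        have := Finset.card_nsmul_le_sum U (fun b => (G b).card) k this
        simpa [smul_eq_mul] using this
    _ = (U.biUnion G).card := hsum.symm
    _ ≤ F.card := by
        apply Finset.card_le_card
        intro x hx
        obtain ⟨b, hb, hxb⟩ := Finset.mem_biUnion.1 hx
        exact (Finset.mem_filter.1 hxb).1
    _ = s.ncard := (Set.ncard_eq_toFinset_card s hs).symm

end Count

section Specific
variable {d : ℕ} {A : Set (Fin d → ℤ)} {n : ℕ}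

lemma blk_disjoint (hn : 1 ≤ n) {x x' : Fin d → ℤ} (h : x ≠ x') :
    Disjoint (blk d n x) (blk d n x') := by
  rw [Set.disjoint_left]
  intro w hw hw'
  rw [mem_blk] at hw hw'
  apply h
  funext j
  have h1 := hw j
  have h2 := hw' j
  have hn' : (1:ℤ) ≤ n := by exact_mod_cast hn
  by_contra hne
  rcases lt_or_gt_of_ne hne with hlt | hlt
  · have : (n:ℤ) * x j + n ≤ n * x' j := by
      have : (n:ℤ) * (x j + 1) ≤ n * x' j :=
        mul_le_mul_of_nonneg_left (by omega) (by linarith)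
      linarith [this]
    omega
  · have : (n:ℤ) * x' j + n ≤ n * x j := by
      have : (n:ℤ) * (x' j + 1) ≤ n * x j :=
        mul_le_mul_of_nonneg_left (by omega) (by linarith)
      linarith [this]
    omega

lemma subset_super (hn : 1 ≤ n) : A ⊆ superBlockSet d A n := by
  intro a ha
  rw [mem_superBlockSet]
  have hn' : (0:ℤ) < n := by exact_mod_cast hn
  refine ⟨fun j => a j / n, ?_, ?_⟩
  · rw [mem_blockSet_iff]
    refine ⟨a, ha, ?_⟩
    rw [mem_blk]
    intro j
    have h1 := Int.mul_ediv_add_emod (a j) n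
    have h2 := Int.emod_nonneg (a j) (by omega : (n:ℤ) ≠ 0)
    have h3 := Int.emod_lt_of_pos (a j) hn'
    constructor <;> omega
  · rw [mem_blk]
    intro j
    have h1 := Int.mul_ediv_add_emod (a j) n
    have h2 := Int.emod_nonneg (a j) (by omega : (n:ℤ) ≠ 0)
    have h3 := Int.emod_lt_of_pos (a j) hn'
    constructor <;> omega

lemma super_subset : superBlockSet d A n ⊆ A + cube d n := by
  intro w hw
  rw [mem_superBlockSet] at hw
  obtain ⟨x, hx, hwblk⟩ := hw
  rw [mem_blockSet_iff] at hx
  obtain ⟨a, ha, hablk⟩ := hx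
  rw [Set.mem_add]
  refine ⟨a, ha, fun j => w j - a j, ?_, by funext j; show a j + (w j - a j) = w j; ring⟩
  rw [mem_cube]
  intro j
  rw [mem_blk] at hwblk hablk
  have h1 := hwblk j
  have h2 := hablk j
  constructor <;> omega

lemma count_upper (hn : 1 ≤ n) (M : ℕ) :
    1^d * (superBlockSet d A n ∩ cube d (n*M)).ncard
      ≤ n^d * (blockSet d A n ∩ cube d M).ncard := by
  rw [one_pow, one_mul]
  apply card_le_of_cover ((cube_finite d (n*M)).inter_of_right _)
    ((cube_finite d M).inter_of_right _) (blk d n) (n^d)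
  · intro b _
    exact ⟨blk_finite b, le_of_eq (ncard_blk b)⟩
  · rintro w ⟨hwS, hwc⟩
    rw [mem_superBlockSet] at hwS
    obtain ⟨x, hx, hwblk⟩ := hwS
    refine ⟨x, ⟨hx, ?_⟩, hwblk⟩
    rw [mem_cube] at hwc ⊢
    intro j
    rw [mem_blk] at hwblk
    have h1 := hwblk j
    have h2 := hwc j
    push_cast at h2
    have hn' : (1:ℤ) ≤ n := by exact_mod_cast hn
    constructor
    · by_contra hcon
      push_neg at hcon
      have : x j + 1 ≤ -(M:ℤ) := by omega
      have := mul_le_mul_of_nonneg_left this (by linarith : (0:ℤ) ≤ n)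
      nlinarith
    · by_contra hcon
      push_neg at hcon
      have : (M:ℤ) + 1 ≤ x j := by omega
      have := mul_le_mul_of_nonneg_left this (by linarith : (0:ℤ) ≤ n)
      nlinarith

lemma count_lower (hn : 1 ≤ n) (M : ℕ) :
    n^d * (blockSet d A n ∩ cube d M).ncard
      ≤ 1^d * (superBlockSet d A n ∩ cube d (n*M+n)).ncard := by
  rw [one_pow, one_mul]
  apply card_ge_of_disjoint ((cube_finite d (n*M+n)).inter_of_right _)
    ((cube_finite d M).inter_of_right _) (blk d n) (n^d)
  · intro b _; exact le_of_eq (ncard_blk b).symm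
  · rintro x ⟨hx, hxc⟩ w hw
    refine ⟨mem_superBlockSet.2 ⟨x, hx, hw⟩, ?_⟩
    rw [mem_cube] at hxc ⊢
    intro j
    rw [mem_blk] at hw
    have h1 := hw j
    have h2 := hxc j
    have hn' : (1:ℤ) ≤ n := by exact_mod_cast hn
    have hb1 : -((n:ℤ)*M) ≤ n * x j := by
      have := mul_le_mul_of_nonneg_left h2.1 (by linarith : (0:ℤ) ≤ n)
      linarith [this]
    have hb2 : (n:ℤ) * x j ≤ n * M := by
      have := mul_le_mul_of_nonneg_left h2.2 (by linarith : (0:ℤ) ≤ n)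
      linarith [this]
    push_cast
    constructor <;> omega
  · rintro x ⟨_, _⟩ x' ⟨_, _⟩ hne
    exact blk_disjoint hn hne

/-- inflated block -/
def blk2 (d n m : ℕ) (x : Fin d → ℤ) : Set (Fin d → ℤ) :=
  Set.Icc ((n:ℤ) • x - fun _ => (m:ℤ)) ((n:ℤ) • x + fun _ => (n:ℤ) - 1 + m)

lemma mem_blk2 {m : ℕ} {x w : Fin d → ℤ} :
    w ∈ blk2 d n m x ↔ ∀ j, (n:ℤ) * x j - m ≤ w j ∧ w j ≤ n * x j + ((n:ℤ) - 1 + m) := by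
  simp [blk2, Set.mem_Icc, Pi.le_def, forall_and]

lemma ncard_blk2 (m : ℕ) (x : Fin d → ℤ) : (blk2 d n m x).ncard = (n+2*m)^d := by
  rw [blk2, ncard_Icc_pi]
  have h : ∀ j : Fin d, ((((n:ℤ) • x + fun _ => (n:ℤ) - 1 + m) : Fin d → ℤ) j + 1
      - (((n:ℤ) • x - fun _ => (m:ℤ)) : Fin d → ℤ) j).toNat = n + 2*m := by
    intro j
    simp only [Pi.add_apply, Pi.sub_apply, Pi.smul_apply, smul_eq_mul]
    omega
  rw [Finset.prod_congr rfl fun j _ => h j]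
  simp

lemma count_sum (hn : 1 ≤ n) (m N : ℕ) :
    n^d * ((A + cube d m) ∩ cube d N).ncard
      ≤ (n+2*m)^d * (superBlockSet d A n ∩ cube d (n*(N/n+m+2)+n)).ncard := by
  set K := N/n + m + 2 with hK
  have hstep1 : ((A + cube d m) ∩ cube d N).ncard
      ≤ (n+2*m)^d * (blockSet d A n ∩ cube d K).ncard := by
    apply card_le_of_cover ((cube_finite d N).inter_of_right _)
      ((cube_finite d K).inter_of_right _) (blk2 d n m) ((n+2*m)^d)
    · intro b _; exact ⟨Set.finite_Icc _ _, le_of_eq (ncard_blk2 m b)⟩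
    · rintro w ⟨hwA, hwc⟩
      rw [Set.mem_add] at hwA
      obtain ⟨a, ha, s, hs, rfl⟩ := hwA
      have haS := subset_super hn ha
      rw [mem_superBlockSet] at haS
      obtain ⟨x, hx, hablk⟩ := haS
      have hnK : (N:ℤ) + m + n ≤ n * K := by
        have h1 := Nat.div_add_mod N n
        have h2 : N % n < n := Nat.mod_lt _ hn
        have h3 : m ≤ n * m := Nat.le_mul_of_pos_left m hn
        have : N + m + n ≤ n * K := by
          rw [hK]
          rw [Nat.mul_add, Nat.mul_add]
          omega
        exact_mod_cast this
      refine ⟨x, ⟨hx, ?_⟩, ?_⟩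
      · rw [mem_cube]
        intro j
        rw [mem_blk] at hablk
        have h1 := hablk j
        rw [mem_cube] at hwc hs
        have h2 := hwc j
        have h3 := hs j
        have hn' : (1:ℤ) ≤ n := by exact_mod_cast hn
        -- n * x j ≤ a j = (a+s) j - s j ≤ N + m ≤ n*K - n < n*K
        -- n * x j ≥ a j - n + 1 ≥ -(N+m) - n + 1 ≥ -(n*K)
        have hup : (n:ℤ) * x j ≤ n * K := by
          have : a j = (a + s) j - s j := by simp
          omega
        have hlo : -((n:ℤ) * K) ≤ n * x j := by
          have : a j = (a + s) j - s j := by simp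
          omega
        constructor
        · by_contra hcon
          push_neg at hcon
          have : x j + 1 ≤ -(K:ℤ) := by omega
          have := mul_le_mul_of_nonneg_left this (by linarith : (0:ℤ) ≤ n)
          nlinarith
        · by_contra hcon
          push_neg at hcon
          have : (K:ℤ) + 1 ≤ x j := by omega
          have := mul_le_mul_of_nonneg_left this (by linarith : (0:ℤ) ≤ n)
          nlinarith
      · rw [mem_blk2]
        intro j
        rw [mem_blk] at hablk
        have h1 := hablk j
        rw [mem_cube] at hs
        have h3 := hs j
        have : (a + s) j = a j + s j := rfl
        constructor <;> omega
  calc n^d * ((A + cube d m) ∩ cube d N).ncard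
      ≤ n^d * ((n+2*m)^d * (blockSet d A n ∩ cube d K).ncard) :=
        Nat.mul_le_mul_left _ hstep1
    _ = (n+2*m)^d * (n^d * (blockSet d A n ∩ cube d K).ncard) := by ring
    _ ≤ (n+2*m)^d * (1^d * (superBlockSet d A n ∩ cube d (n*K+n)).ncard) :=
        Nat.mul_le_mul_left _ (count_lower hn K)
    _ = (n+2*m)^d * (superBlockSet d A n ∩ cube d (n*K+n)).ncard := by rw [one_pow, one_mul]

end Specific

section Analytic
variable {d : ℕ}

noncomputable def tt (d : ℕ) (A : Set (Fin d → ℤ)) (N : ℕ) : ℝ :=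
  (Set.ncard (A ∩ cube d N) : ℝ) / (2 * (N : ℝ) + 1) ^ d

lemma lowerDensity_eq (A : Set (Fin d → ℤ)) :
    lowerDensity d A = Filter.liminf (tt d A) Filter.atTop := rfl

lemma tt_nonneg (A : Set (Fin d → ℤ)) (N : ℕ) : 0 ≤ tt d A N := by
  unfold tt; positivity

lemma tt_le_one (A : Set (Fin d → ℤ)) (N : ℕ) : tt d A N ≤ 1 := by
  unfold tt
  rw [div_le_one (by positivity)]
  have h1 : (A ∩ cube d N).ncard ≤ (cube d N).ncard :=
    Set.ncard_le_ncard Set.inter_subset_right (cube_finite d N)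
  rw [ncard_cube] at h1
  calc ((A ∩ cube d N).ncard : ℝ) ≤ (((2*N+1)^d : ℕ) : ℝ) := by exact_mod_cast h1
    _ = (2 * (N:ℝ) + 1)^d := by push_cast; ring

lemma bddge (u : ℕ → ℝ) (h0 : ∀ N, 0 ≤ u N) :
    Filter.IsBoundedUnder (· ≥ ·) Filter.atTop u :=
  Filter.isBoundedUnder_of ⟨0, h0⟩

lemma bddle (u : ℕ → ℝ) (h1 : ∀ N, u N ≤ 1) :
    Filter.IsBoundedUnder (· ≤ ·) Filter.atTop u :=
  Filter.isBoundedUnder_of ⟨1, h1⟩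

lemma cobddge (u : ℕ → ℝ) (h1 : ∀ N, u N ≤ 1) :
    Filter.IsCoboundedUnder (· ≥ ·) Filter.atTop u :=
  (bddle u h1).isCoboundedUnder_ge

open Filter

lemma liminf_nonneg' {u : ℕ → ℝ} (h0 : ∀ N, 0 ≤ u N) (h1 : ∀ N, u N ≤ 1) :
    0 ≤ liminf u atTop :=
  le_liminf_of_le (cobddge u h1) (Eventually.of_forall h0)

lemma liminf_le_one' {u : ℕ → ℝ} (h1 : ∀ N, u N ≤ 1) (h0 : ∀ N, 0 ≤ u N) :
    liminf u atTop ≤ 1 :=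
  liminf_le_of_frequently_le (Frequently.of_forall h1) (bddge u h0)

/-- The key liminf comparison lemma. -/
lemma key {u v : ℕ → ℝ} (hu0 : ∀ N, 0 ≤ u N) (hu1 : ∀ N, u N ≤ 1)
    (hv0 : ∀ N, 0 ≤ v N) (hv1 : ∀ N, v N ≤ 1)
    {φ : ℕ → ℕ} (hφ : Tendsto φ atTop atTop)
    {c : ℕ → ℝ} {c₀ : ℝ} (hc0 : 0 ≤ c₀)
    (hc : ∀ ε : ℝ, 0 < ε → ∀ᶠ N in atTop, c N ≤ c₀ + ε)
    (h : ∀ᶠ N in atTop, u (φ N) ≤ v N * c N) :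
    liminf u atTop ≤ c₀ * liminf v atTop := by
  by_contra hlt
  push_neg at hlt
  set K := liminf v atTop with hKdef
  have hK0 : 0 ≤ K := liminf_nonneg' hv0 hv1
  have hK1 : K ≤ 1 := liminf_le_one' hv1 hv0
  set δ := liminf u atTop - c₀ * K with hδdef
  have hδpos : 0 < δ := by simp only [hδdef]; linarith
  set ε := min 1 (δ / (2 * (c₀ + 2))) with hεdef
  have hεpos : 0 < ε := lt_min one_pos (by positivity)
  have hε1 : ε ≤ 1 := min_le_left _ _
  have hε2 : ε * (c₀ + 2) ≤ δ / 2 := by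
    have h' : ε ≤ δ / (2 * (c₀ + 2)) := min_le_right _ _
    have hpos : (0:ℝ) < c₀ + 2 := by linarith
    calc ε * (c₀ + 2) ≤ δ / (2 * (c₀ + 2)) * (c₀ + 2) :=
          mul_le_mul_of_nonneg_right h' (by linarith)
      _ = δ / 2 := by field_simp
  have h1 : ∀ᶠ N in atTop, c₀ * K + δ / 2 < u N :=
    eventually_lt_of_lt_liminf (by linarith) (bddge u hu0)
  have h2 : ∃ᶠ N in atTop, v N < K + ε :=
    frequently_lt_of_liminf_lt (cobddge v hv1) (by linarith)
  have h3 := hc ε hεpos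
  have h4 : ∀ᶠ N in atTop, c₀ * K + δ / 2 < u (φ N) := hφ.eventually h1
  obtain ⟨N, hvN, hcN, huN, hN⟩ := (h2.and_eventually (h3.and (h4.and h))).exists
  have e1 : v N * c N ≤ v N * (c₀ + ε) := mul_le_mul_of_nonneg_left hcN (hv0 N)
  have e2 : v N * (c₀ + ε) ≤ (K + ε) * (c₀ + ε) :=
    mul_le_mul_of_nonneg_right hvN.le (by linarith)
  nlinarith [mul_nonneg hεpos.le hc0, mul_nonneg hεpos.le hK0]

lemma key' {u v : ℕ → ℝ} (hu0 : ∀ N, 0 ≤ u N) (hu1 : ∀ N, u N ≤ 1)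
    (hv0 : ∀ N, 0 ≤ v N) (hv1 : ∀ N, v N ≤ 1)
    {φ : ℕ → ℕ} (hφ : Tendsto φ atTop atTop)
    {c b : ℕ → ℝ} {c₀ : ℝ} (hc0 : 0 ≤ c₀)
    (hb : Tendsto b atTop (nhds c₀)) (hcb : ∀ᶠ N in atTop, c N ≤ b N)
    (h : ∀ᶠ N in atTop, u (φ N) ≤ v N * c N) :
    liminf u atTop ≤ c₀ * liminf v atTop := by
  apply key hu0 hu1 hv0 hv1 hφ hc0 _ h
  intro ε hε
  filter_upwards [hcb, hb.eventually_lt_const (lt_add_of_pos_right c₀ hε)] with N h1 h2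
  linarith

lemma ratio_tendsto (k a b' : ℝ) (hk : 0 < k) :
    Tendsto (fun N : ℕ => (k * N + a) / (k * N + b')) atTop (nhds 1) := by
  have h0 : Tendsto (fun N : ℕ => k * (N:ℝ) + b') atTop atTop := by
    apply tendsto_atTop_add_const_right
    exact (tendsto_natCast_atTop_atTop).const_mul_atTop hk
  have h1 : Tendsto (fun N : ℕ => (k * (N:ℝ) + b')⁻¹) atTop (nhds 0) :=
    tendsto_inv_atTop_zero.comp h0
  have h2 : Tendsto (fun N : ℕ => 1 + (a - b') * (k * (N:ℝ) + b')⁻¹) atTop (nhds 1) := by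
    have := (h1.const_mul (a - b')).const_add 1
    simpa using this
  apply h2.congr'
  filter_upwards [h0.eventually_gt_atTop 0] with N hN
  field_simp
  ring

lemma glue {a b : ℕ} (ha : 1 ≤ a) {A B : Set (Fin d → ℤ)} {N M : ℕ}
    (h : a^d * (A ∩ cube d N).ncard ≤ b^d * (B ∩ cube d M).ncard) :
    tt d A N ≤ tt d B M * (((b:ℝ) * (2*M+1)) / ((a:ℝ) * (2*N+1)))^d := by
  unfold tt
  have hα : (0:ℝ) < 2*(N:ℝ)+1 := by positivity
  have hβ : (0:ℝ) < 2*(M:ℝ)+1 := by positivity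
  have ha' : (0:ℝ) < a := by exact_mod_cast ha
  have hb' : (0:ℝ) ≤ b := by positivity
  have hreal : (a:ℝ)^d * (A ∩ cube d N).ncard ≤ (b:ℝ)^d * (B ∩ cube d M).ncard := by
    exact_mod_cast h
  rw [div_pow, div_mul_div_comm, div_le_div_iff₀ (by positivity) (by positivity)]
  calc ((A ∩ cube d N).ncard : ℝ) * ((2*(M:ℝ)+1)^d * ((a:ℝ)*(2*(N:ℝ)+1))^d)
      = ((a:ℝ)^d * (A ∩ cube d N).ncard) * ((2*(N:ℝ)+1)^d * (2*(M:ℝ)+1)^d) := by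
        rw [mul_pow]; ring
    _ ≤ ((b:ℝ)^d * (B ∩ cube d M).ncard) * ((2*(N:ℝ)+1)^d * (2*(M:ℝ)+1)^d) :=
        mul_le_mul_of_nonneg_right hreal (by positivity)
    _ = ((B ∩ cube d M).ncard : ℝ) * ((b:ℝ)*(2*(M:ℝ)+1))^d * (2*(N:ℝ)+1)^d := by
        rw [mul_pow]; ring

end Analytic

section Ineqs
open Filter
variable {d : ℕ} {A : Set (Fin d → ℤ)} {n : ℕ}

lemma tt_mono {B C : Set (Fin d → ℤ)} (h : B ⊆ C) (N : ℕ) : tt d B N ≤ tt d C N := by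
  unfold tt
  apply div_le_div_of_nonneg_right ?_ (by positivity)
  · exact_mod_cast Set.ncard_le_ncard (Set.inter_subset_inter_left _ h)
      ((cube_finite d N).inter_of_right _)

lemma ld_mono {B C : Set (Fin d → ℤ)} (h : B ⊆ C) :
    liminf (tt d B) atTop ≤ liminf (tt d C) atTop :=
  liminf_le_liminf (Eventually.of_forall (tt_mono h))
    (bddge _ (tt_nonneg B)) (cobddge _ (tt_le_one C))

lemma ineq_SX (hn : 1 ≤ n) :
    liminf (tt d (superBlockSet d A n)) atTop
      ≤ 1 * liminf (tt d (blockSet d A n)) atTop := by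
  apply key' (tt_nonneg _) (tt_le_one _) (tt_nonneg _) (tt_le_one _)
    (φ := fun M => n * M)
    (c := fun M => ((((n:ℕ):ℝ) * (2*(M:ℝ)+1)) / (((1:ℕ):ℝ) * (2*((n*M : ℕ):ℝ)+1)))^d)
    (b := fun M => ((2*(M:ℝ)+(n:ℝ)) / (2*(M:ℝ)+1))^d)
    (tendsto_atTop_mono (fun M => Nat.le_mul_of_pos_left M hn) tendsto_id)
    zero_le_one
  · have := (ratio_tendsto 2 (n:ℝ) 1 two_pos).pow d
    simpa using this
  · filter_upwards with M
    have hn' : (1:ℝ) ≤ (n:ℝ) := by exact_mod_cast hn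
    have hM : (0:ℝ) ≤ (M:ℝ) := Nat.cast_nonneg M
    apply pow_le_pow_left₀ (by positivity)
    push_cast
    rw [one_mul, div_le_div_iff₀ (by positivity) (by positivity)]
    nlinarith [sq_nonneg ((n:ℝ) - 1), mul_nonneg hM (sq_nonneg ((n:ℝ)-1))]
  · filter_upwards with M
    exact glue le_rfl (count_upper hn M)

lemma ineq_XS (hn : 1 ≤ n) :
    liminf (tt d (blockSet d A n)) atTop
      ≤ 1 * liminf (tt d (superBlockSet d A n)) atTop := by
  have hφ : Tendsto (fun N : ℕ => (N - n) / n) atTop atTop := by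
    rw [tendsto_atTop_atTop]
    intro b
    refine ⟨n * b + n + n, fun N hN => ?_⟩
    rw [Nat.le_div_iff_mul_le hn]
    have : b * n = n * b := Nat.mul_comm _ _
    omega
  apply key' (tt_nonneg _) (tt_le_one _) (tt_nonneg _) (tt_le_one _) hφ
    (c := fun N => ((((1:ℕ):ℝ) * (2*(N:ℝ)+1)) / (((n:ℕ):ℝ) * (2*(((N - n)/n : ℕ):ℝ)+1)))^d)
    (b := fun N => ((2*(N:ℝ)+1) / (2*(N:ℝ)+(2-3*(n:ℝ))))^d)
    zero_le_one
  · have := (ratio_tendsto 2 1 (2-3*(n:ℝ)) two_pos).pow d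
    simpa using this
  · filter_upwards [eventually_ge_atTop (4*n+1)] with N hN
    set q := (N - n) / n with hq
    have hn1 : n ≤ N := by omega
    have h1 : n * q + (N - n) % n = N - n := Nat.div_add_mod (N - n) n
    have h2 : (N - n) % n < n := Nat.mod_lt _ hn
    have hnq : (N:ℝ) - 2*(n:ℝ) + 1 ≤ (n:ℝ) * (q:ℝ) := by
      have : N - 2*n + 1 ≤ n * q := by omega
      have h3 : (2:ℕ)*n ≤ N := by omega
      calc (N:ℝ) - 2*(n:ℝ) + 1 = ((N - 2*n + 1 : ℕ) : ℝ) := by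
            push_cast [Nat.cast_sub h3]; ring
        _ ≤ ((n * q : ℕ) : ℝ) := by exact_mod_cast this
        _ = (n:ℝ) * (q:ℝ) := by push_cast; ring
    have hn' : (1:ℝ) ≤ (n:ℝ) := by exact_mod_cast hn
    have hN' : (4*(n:ℝ)+1) ≤ (N:ℝ) := by exact_mod_cast hN
    apply pow_le_pow_left₀ (by positivity)
    rw [Nat.cast_one, one_mul]
    apply div_le_div_of_nonneg_left (by positivity) (by linarith)
    -- goal : 2*N + (2 - 3n) ≤ n * (2*q+1)
    nlinarith
  · filter_upwards [eventually_ge_atTop (4*n+1)] with N hN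
    apply glue hn
    set q := (N - n) / n with hq
    have h1 : n * q + (N - n) % n = N - n := Nat.div_add_mod (N - n) n
    have hle : n * q + n ≤ N := by omega
    calc n^d * (blockSet d A n ∩ cube d q).ncard
        ≤ 1^d * (superBlockSet d A n ∩ cube d (n*q+n)).ncard := count_lower hn q
      _ ≤ 1^d * (superBlockSet d A n ∩ cube d N).ncard := by
          apply Nat.mul_le_mul_left
          exact Set.ncard_le_ncard (Set.inter_subset_inter (subset_refl _) (cube_mono hle))
            ((cube_finite d N).inter_of_right _)

lemma ineq_AS (hn : 1 ≤ n) (m : ℕ) :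
    liminf (tt d (A + cube d m)) atTop
      ≤ (((n:ℝ)+2*(m:ℝ))/(n:ℝ))^d * liminf (tt d (superBlockSet d A n)) atTop := by
  have hn' : (1:ℝ) ≤ (n:ℝ) := by exact_mod_cast hn
  have hφ : Tendsto (fun N : ℕ => N - (n*m + 3*n)) atTop atTop :=
    tendsto_sub_atTop_nat _
  apply key' (tt_nonneg _) (tt_le_one _) (tt_nonneg _) (tt_le_one _) hφ
    (c := fun N => ((((n+2*m:ℕ)):ℝ) * (2*(N:ℝ)+1) /
      (((n:ℕ):ℝ) * (2*(((N - (n*m + 3*n)) : ℕ):ℝ)+1)))^d)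
    (b := fun N => (((n:ℝ)+2*(m:ℝ))/(n:ℝ))^d *
      ((2*(N:ℝ)+1) / (2*(N:ℝ)+(1 - 2*((n:ℝ)*(m:ℝ)) - 6*(n:ℝ))))^d)
    (by positivity)
  · have h1 := ((ratio_tendsto 2 1 (1 - 2*((n:ℝ)*(m:ℝ)) - 6*(n:ℝ)) two_pos).pow d).const_mul
      ((((n:ℝ)+2*(m:ℝ))/(n:ℝ))^d)
    simpa using h1
  · filter_upwards [eventually_ge_atTop (n*m + 3*n)] with N hN
    apply le_of_eq
    have hc : (((N - (n*m + 3*n)) : ℕ):ℝ) = (N:ℝ) - ((n:ℝ)*(m:ℝ) + 3*(n:ℝ)) := by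
      push_cast [Nat.cast_sub hN]; ring
    rw [hc]
    rw [mul_div_mul_comm, mul_pow]
    congr 2
    · push_cast; ring
    · ring
  · filter_upwards [eventually_ge_atTop (n*m + 3*n)] with N hN
    apply glue hn
    set N₀ := N - (n*m + 3*n) with hN₀
    set K := N₀/n + m + 2 with hK
    have h1 : n * (N₀/n) + N₀ % n = N₀ := Nat.div_add_mod N₀ n
    have hle : n*K + n ≤ N := by
      rw [hK, Nat.mul_add, Nat.mul_add]
      omega
    calc n^d * ((A + cube d m) ∩ cube d N₀).ncard
        ≤ (n+2*m)^d * (superBlockSet d A n ∩ cube d (n*K+n)).ncard := count_sum hn m N₀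
      _ ≤ (n+2*m)^d * (superBlockSet d A n ∩ cube d N).ncard := by
          apply Nat.mul_le_mul_left
          exact Set.ncard_le_ncard (Set.inter_subset_inter (subset_refl _) (cube_mono hle))
            ((cube_finite d N).inter_of_right _)

end Ineqs

end Stmt14

open Stmt14 Filter

theorem stmt_14 (d : ℕ) (hd : 1 ≤ d) (A : Set (Fin d → ℤ)) :
    ∃ L : ℝ,
      Tendsto (fun i : ℕ => lowerDensity d (blockSet d A i)) atTop (nhds L) ∧
      Tendsto (fun i : ℕ => lowerDensity d (superBlockSet d A i)) atTop (nhds L) ∧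
      Tendsto (fun i : ℕ => lowerDensity d (A + cube d i)) atTop (nhds L) := by
  classical
  simp only [lowerDensity_eq]
  set g : ℕ → ℝ := fun i => liminf (tt d (A + cube d i)) atTop with hgdef
  have hgmono : Monotone g := fun i j hij =>
    ld_mono (Set.add_subset_add_left (cube_mono hij))
  have hgb : ∀ i, g i ≤ 1 := fun i => liminf_le_one' (tt_le_one _) (tt_nonneg _)
  have hbdd : BddAbove (Set.range g) := ⟨1, by rintro _ ⟨i, rfl⟩; exact hgb i⟩
  set L := ⨆ i, g i with hLdef
  have hgL : Tendsto g atTop (nhds L) := tendsto_atTop_ciSup hgmono hbdd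
  have hI1 : ∀ i : ℕ, liminf (tt d (superBlockSet d A i)) atTop ≤ g i :=
    fun i => ld_mono super_subset
  -- superBlockSet tendency
  have hS : Tendsto (fun i : ℕ => liminf (tt d (superBlockSet d A i)) atTop)
      atTop (nhds L) := by
    rw [tendsto_order]
    constructor
    · intro a ha
      obtain ⟨m, ham⟩ := exists_lt_of_lt_ciSup ha
      have h2 : Tendsto (fun N : ℕ => ((N:ℝ)/((N:ℝ)+2*(m:ℝ)))^d) atTop (nhds 1) := by
        have := (ratio_tendsto 1 0 (2*(m:ℝ)) one_pos).pow d
        simpa using this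
      have hw : Tendsto (fun i : ℕ => g m * (((i:ℝ)/((i:ℝ)+2*(m:ℝ)))^d)) atTop
          (nhds (g m)) := by
        simpa using h2.const_mul (g m)
      filter_upwards [hw.eventually_const_lt ham, eventually_ge_atTop 1] with i h1 hi
      have hI4 := ineq_AS (A := A) hi m
      have hi' : (1:ℝ) ≤ (i:ℝ) := by exact_mod_cast hi
      have hone : (((i:ℝ)+2*(m:ℝ))/(i:ℝ)) * ((i:ℝ)/((i:ℝ)+2*(m:ℝ))) = 1 := by
        field_simp
      calc a < g m * (((i:ℝ)/((i:ℝ)+2*(m:ℝ)))^d) := h1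
        _ ≤ ((((i:ℝ)+2*(m:ℝ))/(i:ℝ))^d * liminf (tt d (superBlockSet d A i)) atTop)
              * (((i:ℝ)/((i:ℝ)+2*(m:ℝ)))^d) :=
            mul_le_mul_of_nonneg_right hI4 (by positivity)
        _ = liminf (tt d (superBlockSet d A i)) atTop
              * ((((i:ℝ)+2*(m:ℝ))/(i:ℝ)) * ((i:ℝ)/((i:ℝ)+2*(m:ℝ))))^d := by
            rw [mul_pow]; ring
        _ = liminf (tt d (superBlockSet d A i)) atTop := by
            rw [hone, one_pow, mul_one]
    · intro b hb
      filter_upwards with i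
      calc liminf (tt d (superBlockSet d A i)) atTop ≤ g i := hI1 i
        _ ≤ L := le_ciSup hbdd i
        _ < b := hb
  -- blockSet
  have heq : (fun i : ℕ => liminf (tt d (superBlockSet d A i)) atTop)
      =ᶠ[atTop] (fun i : ℕ => liminf (tt d (blockSet d A i)) atTop) := by
    filter_upwards [eventually_ge_atTop 1] with i hi
    apply le_antisymm
    · have := ineq_SX (A := A) hi
      simpa using this
    · have := ineq_XS (A := A) hi
      simpa using this
  exact ⟨L, hS.congr' heq, hS, hgL⟩
end
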